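/- Let v be a finitely additive valuation on an algebra A over an abstract set X with v(∅)=0, v(X)=1. If v is sliceable, then v satisfies property (DD): for every A ∈ A and every α ∈ (0,1) there is an increasing sequence B^1 ⊆ B^2 ⊆ ⋯ of sets in A with B^n ⊆ A and sup_n v(B^n) = α·v(A). -/
import Mathlib

theorem sliceable_implies_DD
    {X : Type*} (𝒜 : Set (Set X)) (v : Set X → ℝ)
    (h_empty : (∅ : Set X) ∈ 𝒜)
    (h_compl : ∀ A ∈ 𝒜, Aᶜ ∈ 𝒜)
    (h_union : ∀ A ∈ 𝒜, ∀ B ∈ 𝒜, A ∪ B ∈ 𝒜)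
    (h_range : ∀ A ∈ 𝒜, v A ∈ Set.Icc (0:ℝ) 1)
    (h_zero : v ∅ = 0)
    (h_one : v Set.univ = 1)
    (h_add : ∀ A ∈ 𝒜, ∀ B ∈ 𝒜, Disjoint A B → v (A ∪ B) = v A + v B)
    (h_sliceable : ∀ ε : ℝ, 0 < ε →
      ∃ (n : ℕ) (B : Fin n → Set X),
        (∀ i, B i ∈ 𝒜) ∧
        Pairwise (Function.onFun Disjoint B) ∧
        (⋃ i, B i) = Set.univ ∧
        ∀ i, 0 < v (B i) ∧ v (B i) ≤ ε) :
    ∀ A ∈ 𝒜, ∀ α : ℝ, α ∈ Set.Ioo (0:ℝ) 1 →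
      ∃ B : ℕ → Set X,
        (∀ n, B n ∈ 𝒜) ∧
        Monotone B ∧
        (∀ n, B n ⊆ A) ∧
        (⨆ n, v (B n)) = α * v A ∧ BddAbove (Set.range fun n => v (B n)) := by
  classical
  -- closure under intersection and difference
  have h_inter : ∀ A ∈ 𝒜, ∀ B ∈ 𝒜, A ∩ B ∈ 𝒜 := by
    intro A hA B hB
    have h : A ∩ B = (Aᶜ ∪ Bᶜ)ᶜ := by
      rw [Set.compl_union, compl_compl, compl_compl]
    rw [h]
    exact h_compl _ (h_union _ (h_compl _ hA) _ (h_compl _ hB))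
  have h_diff : ∀ A ∈ 𝒜, ∀ B ∈ 𝒜, A \ B ∈ 𝒜 := by
    intro A hA B hB
    rw [Set.diff_eq]
    exact h_inter _ hA _ (h_compl _ hB)
  have h_nonneg : ∀ A ∈ 𝒜, 0 ≤ v A := fun A hA => (h_range A hA).1
  -- monotonicity of v on 𝒜
  have h_mono : ∀ A ∈ 𝒜, ∀ B ∈ 𝒜, B ⊆ A → v B ≤ v A := by
    intro A hA B hB hBA
    have h1 : B ∪ (A \ B) = A := Set.union_diff_cancel hBA
    have h2 := h_add B hB (A \ B) (h_diff _ hA _ hB) Set.disjoint_sdiff_right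
    rw [h1] at h2
    have := h_nonneg (A \ B) (h_diff _ hA _ hB)
    linarith
  -- key greedy step lemma
  have step : ∀ A ∈ 𝒜, ∀ t : ℝ, t < v A → ∀ B0 ∈ 𝒜, B0 ⊆ A → v B0 ≤ t →
      ∀ ε : ℝ, 0 < ε → ∃ B', B' ∈ 𝒜 ∧ B0 ⊆ B' ∧ B' ⊆ A ∧ v B' ≤ t ∧ t - ε < v B' := by
    intro A hA t ht B0 hB0 hB0A hv0 ε hε
    obtain ⟨n, C, hC𝒜, hCdisj, hCcover, hCv⟩ := h_sliceable ε hε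
    set D : ℕ → Set X := fun j => if h : j < n then C ⟨j, h⟩ ∩ (A \ B0) else ∅ with hDdef
    have hD𝒜 : ∀ j, D j ∈ 𝒜 := by
      intro j
      by_cases h : j < n
      · simp only [hDdef, dif_pos h]
        exact h_inter _ (hC𝒜 _) _ (h_diff _ hA _ hB0)
      · simp only [hDdef, dif_neg h]; exact h_empty
    have hDsub : ∀ j, D j ⊆ A \ B0 := by
      intro j
      by_cases h : j < n
      · simp only [hDdef, dif_pos h]; exact Set.inter_subset_right
      · simp only [hDdef, dif_neg h]; exact Set.empty_subset _
    have hDv : ∀ j, v (D j) ≤ ε := by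
      intro j
      by_cases h : j < n
      · simp only [hDdef, dif_pos h]
        exact le_trans (h_mono _ (hC𝒜 _) _ (h_inter _ (hC𝒜 _) _ (h_diff _ hA _ hB0))
          Set.inter_subset_left) (hCv ⟨j, h⟩).2
      · simp only [hDdef, dif_neg h, h_zero]; exact le_of_lt hε
    have hDdisj : ∀ j k, j ≠ k → Disjoint (D j) (D k) := by
      intro j k hjk
      by_cases hj : j < n
      · by_cases hk : k < n
        · simp only [hDdef, dif_pos hj, dif_pos hk]
          exact Set.disjoint_of_subset Set.inter_subset_left Set.inter_subset_left
            (hCdisj (by simpa using hjk))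
        · simp only [hDdef, dif_neg hk]; exact Set.disjoint_empty _
      · simp only [hDdef, dif_neg hj]; exact Set.empty_disjoint _
    have hDcov : ∀ x ∈ A \ B0, ∃ j, j < n ∧ x ∈ D j := by
      intro x hx
      have : x ∈ ⋃ i, C i := by rw [hCcover]; exact Set.mem_univ x
      obtain ⟨i, hi⟩ := Set.mem_iUnion.mp this
      exact ⟨i.1, i.2, by simp only [hDdef, dif_pos i.2]; exact ⟨by simpa using hi, hx⟩⟩
    -- greedy construction
    let F : ℕ → Set X := fun k =>
      Nat.rec (motive := fun _ => Set X) B0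
        (fun k Fk => if v (Fk ∪ D k) ≤ t then Fk ∪ D k else Fk) k
    have hF0 : F 0 = B0 := rfl
    have hFsucc : ∀ k, F (k + 1) = if v (F k ∪ D k) ≤ t then F k ∪ D k else F k :=
      fun k => rfl
    have hFmono : ∀ k, F k ⊆ F (k + 1) := by
      intro k
      rw [hFsucc k]
      split_ifs
      · exact Set.subset_union_left
      · exact subset_rfl
    have hFle : ∀ k m, k ≤ m → F k ⊆ F m := by
      intro k m hkm
      induction m with
      | zero => rw [Nat.le_zero.mp hkm]
      | succ m ih =>
        rcases Nat.lt_or_ge k (m + 1) with h | h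
        · exact (ih (Nat.lt_succ_iff.mp h)).trans (hFmono m)
        · rw [Nat.le_antisymm hkm h]
    have hI : ∀ k, F k ∈ 𝒜 ∧ F k ⊆ A ∧ v (F k) ≤ t ∧ ∀ j, k ≤ j → Disjoint (D j) (F k) := by
      intro k
      induction k with
      | zero =>
        refine ⟨hB0, hB0A, hv0, fun j _ => ?_⟩
        exact Set.disjoint_left.mpr fun x hx => ((hDsub j) hx).2
      | succ k ih =>
        obtain ⟨ih1, ih2, ih3, ih4⟩ := ih
        rw [hFsucc k]
        split_ifs with h
        · refine ⟨h_union _ ih1 _ (hD𝒜 k), Set.union_subset ih2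
            ((hDsub k).trans Set.diff_subset), h, fun j hj => ?_⟩
          exact Disjoint.union_right (ih4 j (Nat.le_of_succ_le hj))
            (hDdisj j k (by omega))
        · exact ⟨ih1, ih2, ih3, fun j hj => ih4 j (Nat.le_of_succ_le hj)⟩
    obtain ⟨hFn𝒜, hFnA, hFnt, _⟩ := hI n
    by_cases hall : ∀ k, k < n → v (F k ∪ D k) ≤ t
    · exfalso
      have hAsub : A ⊆ F n := by
        intro x hx
        by_cases hxB : x ∈ B0
        · exact hFle 0 n (Nat.zero_le n) hxB
        · obtain ⟨j, hj, hxD⟩ := hDcov x ⟨hx, hxB⟩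
          have : x ∈ F (j + 1) := by
            rw [hFsucc j, if_pos (hall j hj)]
            exact Or.inr hxD
          exact hFle (j + 1) n hj this
      have := h_mono (F n) hFn𝒜 A hA hAsub
      linarith
    · push_neg at hall
      obtain ⟨k, hk, hkt⟩ := hall
      obtain ⟨hk𝒜, _, hkle, hkdisj⟩ := hI k
      have hadd := h_add (F k) hk𝒜 (D k) (hD𝒜 k) (hkdisj k le_rfl).symm
      have hvk : t - ε < v (F k) := by
        have := hDv k
        rw [hadd] at hkt
        linarith
      have : v (F k) ≤ v (F n) := h_mono _ hFn𝒜 _ hk𝒜 (hFle k n (le_of_lt hk))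
      exact ⟨F n, hFn𝒜, hFle 0 n (Nat.zero_le n), hFnA, hFnt, by linarith⟩
  -- main argument
  intro A hA α hα
  obtain ⟨hα0, hα1⟩ := hα
  rcases eq_or_lt_of_le (h_nonneg A hA) with hvA | hvA
  · -- v A = 0
    refine ⟨fun _ => ∅, fun _ => h_empty, monotone_const, fun _ => Set.empty_subset _, ?_, ?_⟩
    · simp only [h_zero, ciSup_const, ← hvA, mul_zero]
    · exact ⟨0, by rintro x ⟨m, rfl⟩; simp [h_zero]⟩
  · set t : ℝ := α * v A with htdef
    have ht_pos : 0 < t := mul_pos hα0 hvA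
    have ht_lt : t < v A := by
      have := mul_lt_mul_of_pos_right hα1 hvA
      simpa using this
    set Q : Set X → Prop := fun B => B ∈ 𝒜 ∧ B ⊆ A ∧ v B ≤ t with hQdef
    have hQ0 : Q ∅ := ⟨h_empty, Set.empty_subset _, by rw [h_zero]; exact le_of_lt ht_pos⟩
    have hstep : ∀ (p : {B // Q B}) (n : ℕ),
        ∃ B' : {B // Q B}, p.1 ⊆ B'.1 ∧ t - 1 / (n + 1) < v B'.1 := by
      intro p n
      obtain ⟨hB𝒜, hBA, hBt⟩ := p.2
      have hεp : (0:ℝ) < 1 / (n + 1) := by positivity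
      obtain ⟨B', hB'𝒜, hsub, hB'A, hB't, hB'gt⟩ :=
        step A hA t ht_lt p.1 hB𝒜 hBA hBt (1 / (n + 1)) hεp
      exact ⟨⟨B', hB'𝒜, hB'A, hB't⟩, hsub, hB'gt⟩
    choose g hg1 hg2 using hstep
    let S : ℕ → {B // Q B} := fun n =>
      Nat.rec (motive := fun _ => {B // Q B}) ⟨∅, hQ0⟩ (fun n p => g p n) n
    have hSsucc : ∀ n, S (n + 1) = g (S n) n := fun n => rfl
    have hbdd : BddAbove (Set.range fun n => v (S n).1) := by
      refine ⟨t, ?_⟩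
      rintro x ⟨m, rfl⟩
      exact (S m).2.2.2
    refine ⟨fun n => (S n).1, fun n => (S n).2.1,
      monotone_nat_of_le_succ fun n => by rw [hSsucc n]; exact hg1 (S n) n,
      fun n => (S n).2.2.1, ?_, hbdd⟩
    refine le_antisymm (ciSup_le fun n => (S n).2.2.2) ?_
    refine le_of_forall_sub_le ?_
    intro ε hε
    obtain ⟨m, hm⟩ := exists_nat_one_div_lt hε
    have h1 : t - ε < v (S (m + 1)).1 := by
      have := hg2 (S m) m
      rw [← hSsucc m] at this
      linarith
    exact le_trans (le_of_lt h1) (le_ciSup hbdd (m + 1))
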